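/- Let α ∈ (0,1], L > 0, let N ≥ 1 be an integer, h = 2L/N, and let u : [-L,L]² → ℝ be continuously differentiable with both first partial derivatives α-Hölder continuous on [-L,L]², and let ‖u‖_{C^{1,α}} denote the sum of the supremum norms of u, ∂u/∂x, ∂u/∂y and the α-Hölder seminorms of ∂u/∂x and ∂u/∂y on [-L,L]². Let I₂u be the piecewise-bilinear interpolant of u on the uniform grid (x_i,y_j) = (-L+ih, -L+jh), 0 ≤ i,j ≤ N. Then there exists a constant C > 0 depending only on α such that sup_{(x,y) ∈ [-L,L]²} |u(x,y) - (I₂u)(x,y)| ≤ C h^{1+α} ‖u‖_{C^{1,α}}. -/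

import Mathlib

/-- The one-dimensional hat function centered at c with mesh h. -/
noncomputable def hatFn (h c y : ℝ) : ℝ := max 0 (1 - |y - c| / h)

/-- The piecewise-bilinear interpolant of u on the uniform grid of [-L,L]²,
written as the tensor-product hat-function expansion (which agrees with u at each
node and is bilinear on each cell). -/
noncomputable def interp2D (u : ℝ → ℝ → ℝ) (L h : ℝ) (N : ℕ) (ξ η : ℝ) : ℝ :=
  ∑ p ∈ Finset.range (N + 1), ∑ q ∈ Finset.range (N + 1),
    u (-L + p * h) (-L + q * h) * hatFn h (-L + p * h) ξ * hatFn h (-L + q * h) η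

/-- for α ∈ (0,1] there is C > 0 depending only on α such that for
any u that is C¹ on [-L,L]² with α-Hölder first partial derivatives (with sup
bounds Mu, Mx, My and Hölder constants Hx, Hy, whose sum plays the role of the
C^{1,α} norm), the piecewise-bilinear interpolant on the uniform grid with mesh
h = 2L/N satisfies the uniform error bound C h^{1+α} (Mu + Mx + My + Hx + Hy). -/
lemma hat_nonneg (h c y : ℝ) : 0 ≤ hatFn h c y := le_max_left _ _

lemma hat_eq_zero {h c y : ℝ} (hh : 0 < h) (H : h ≤ |y - c|) : hatFn h c y = 0 := by
  have : 1 - |y - c| / h ≤ 0 := by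
    have : 1 ≤ |y - c| / h := (one_le_div hh).2 H
    linarith
  simp [hatFn, max_eq_left this]

lemma sum_hat_eq (L h : ℝ) (hh : 0 < h) (N : ℕ) (hN : 1 ≤ N) (hL : -L + N * h = L)
    (η : ℝ) (hη : η ∈ Set.Icc (-L) L) :
    ∃ j : ℕ, j + 1 ≤ N ∧ -L + j * h ≤ η ∧ η ≤ -L + ((j : ℝ) + 1) * h ∧
      ∀ v : ℕ → ℝ, ∑ q ∈ Finset.range (N + 1), v q * hatFn h (-L + q * h) η
        = v j * ((-L + ((j : ℝ) + 1) * h - η) / h) + v (j + 1) * ((η - (-L + j * h)) / h) := by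
  set t : ℝ := (η + L) / h with ht
  have ht0 : 0 ≤ t := div_nonneg (by linarith [hη.1]) hh.le
  have htN : t ≤ N := by
    rw [div_le_iff₀ hh]
    have := hη.2
    nlinarith
  refine ⟨min ⌊t⌋₊ (N - 1), ?_, ?_, ?_, ?_⟩
  case _ => omega
  all_goals {
    set j : ℕ := min ⌊t⌋₊ (N - 1) with hj
    have hjt : (j : ℝ) ≤ t := by
      calc (j : ℝ) ≤ (⌊t⌋₊ : ℝ) := by exact_mod_cast Nat.cast_le.2 (min_le_left _ _)
        _ ≤ t := Nat.floor_le ht0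
    have htj : t ≤ (j : ℝ) + 1 := by
      rcases le_or_gt (⌊t⌋₊) (N - 1) with hc | hc
      · have : j = ⌊t⌋₊ := min_eq_left hc
        rw [this]
        exact (Nat.lt_floor_add_one t).le
      · have hje : j = N - 1 := min_eq_right hc.le
        have : (j : ℝ) + 1 = (N : ℝ) := by
          rw [hje]; push_cast [Nat.cast_sub hN]; ring
        rw [this]; exact htN
    have hlo : -L + j * h ≤ η := by
      have := (mul_le_mul_iff_of_pos_right hh).2 hjt
      rw [ht, div_mul_cancel₀ _ hh.ne'] at this
      linarith
    have hhi : η ≤ -L + ((j : ℝ) + 1) * h := by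
      have := (mul_le_mul_iff_of_pos_right hh).2 htj
      rw [ht, div_mul_cancel₀ _ hh.ne'] at this
      linarith
    first
    | exact hlo
    | exact hhi
    | { intro v
        have hjN : j + 1 ≤ N := by omega
        have hsub : ({j, j + 1} : Finset ℕ) ⊆ Finset.range (N + 1) := by
          intro q hq
          simp only [Finset.mem_insert, Finset.mem_singleton] at hq
          rcases hq with rfl | rfl <;> simp [Finset.mem_range] <;> omega
        have hz : ∀ q ∈ Finset.range (N + 1), q ∉ ({j, j + 1} : Finset ℕ) →
            v q * hatFn h (-L + q * h) η = 0 := by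
          intro q hqr hq
          simp only [Finset.mem_insert, Finset.mem_singleton, not_or] at hq
          have : hatFn h (-L + q * h) η = 0 := by
            apply hat_eq_zero hh
            rcases lt_or_gt_of_ne hq.1 with hlt | hgt
            · have hq1 : (q : ℝ) + 1 ≤ j := by exact_mod_cast hlt
              have : -L + q * h ≤ η - h := by nlinarith
              have h2 : h ≤ η - (-L + q * h) := by linarith
              exact h2.trans (le_abs_self _)
            · have hq2 : (j : ℝ) + 2 ≤ q := by exact_mod_cast (by omega : j + 2 ≤ q)
              have : η + h ≤ -L + q * h := by nlinarith
              rw [abs_sub_comm]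
              have h2 : h ≤ (-L + q * h) - η := by linarith
              exact h2.trans (le_abs_self _)
          rw [this, mul_zero]
        rw [← Finset.sum_subset hsub hz]
        have hne : j ≠ j + 1 := by omega
        rw [Finset.sum_pair hne]
        have hv1 : hatFn h (-L + j * h) η = (-L + ((j : ℝ) + 1) * h - η) / h := by
          have habs : |η - (-L + j * h)| = η - (-L + j * h) := abs_of_nonneg (by linarith)
          have hle : η - (-L + j * h) ≤ h := by nlinarith
          rw [hatFn, habs, max_eq_right]
          · field_simp; ring
          · rw [sub_nonneg, div_le_one hh]; linarith
        have hv2 : hatFn h (-L + (j + 1 : ℕ) * h) η = (η - (-L + j * h)) / h := by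
          have hc : (-L + ((j : ℕ) + 1 : ℕ) * h : ℝ) = -L + ((j : ℝ) + 1) * h := by push_cast; ring
          rw [hc]
          have habs : |η - (-L + ((j : ℝ) + 1) * h)| = (-L + ((j : ℝ) + 1) * h) - η := by
            rw [abs_sub_comm]; exact abs_of_nonneg (by linarith)
          have hle : (-L + ((j : ℝ) + 1) * h) - η ≤ h := by nlinarith
          rw [hatFn, habs, max_eq_right]
          · field_simp; ring
          · rw [sub_nonneg, div_le_one hh]; linarith
        rw [hv1, hv2] }
  }

lemma oneD (α : ℝ) (hα : α ∈ Set.Ioc (0 : ℝ) 1) (L h : ℝ) (hh : 0 < h)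
    (f f' : ℝ → ℝ) (H : ℝ) (hH : 0 ≤ H)
    (hd : ∀ t ∈ Set.Icc (-L) L, HasDerivWithinAt f (f' t) (Set.Icc (-L) L) t)
    (hHol : ∀ s ∈ Set.Icc (-L) L, ∀ t ∈ Set.Icc (-L) L, |f' s - f' t| ≤ H * |s - t| ^ α)
    (a η : ℝ) (haL : Set.Icc a (a + h) ⊆ Set.Icc (-L) L)
    (hη : η ∈ Set.Icc a (a + h)) :
    |f a * ((a + h - η) / h) + f (a + h) * ((η - a) / h) - f η| ≤ H * h ^ (1 + α) := by
  set b := a + h with hb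
  set g : ℝ → ℝ := fun t => f t - t * f' η with hg
  have hηL : η ∈ Set.Icc (-L) L := haL hη
  have hgd : ∀ t ∈ Set.Icc a b, HasDerivWithinAt g (f' t - f' η) (Set.Icc a b) t := by
    intro t ht
    have h1 : HasDerivWithinAt f (f' t) (Set.Icc a b) t := (hd t (haL ht)).mono haL
    have h2 : HasDerivWithinAt (fun y : ℝ => y * f' η) (f' η) (Set.Icc a b) t := by
      simpa using ((hasDerivAt_id t).mul_const (f' η)).hasDerivWithinAt
    exact h1.sub h2
  have hbound : ∀ t ∈ Set.Icc a b, ‖f' t - f' η‖ ≤ H * h ^ α := by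
    intro t ht
    have h1 : |f' t - f' η| ≤ H * |t - η| ^ α := hHol t (haL ht) η hηL
    have h2 : |t - η| ≤ h := by
      rw [abs_le]
      constructor <;> [linarith [ht.1, hη.2]; linarith [ht.2, hη.1]]
    have h3 : |t - η| ^ α ≤ h ^ α := Real.rpow_le_rpow (abs_nonneg _) h2 hα.1.le
    calc ‖f' t - f' η‖ = |f' t - f' η| := rfl
      _ ≤ H * |t - η| ^ α := h1
      _ ≤ H * h ^ α := by nlinarith
  have key : ∀ x ∈ Set.Icc a b, ‖g x - g η‖ ≤ (H * h ^ α) * h := by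
    intro x hx
    have := (convex_Icc a b).norm_image_sub_le_of_norm_hasDerivWithin_le hgd hbound hη hx
    have hxd : ‖x - η‖ ≤ h := by
      rw [Real.norm_eq_abs, abs_le]
      constructor <;> [linarith [hx.1, hη.2]; linarith [hx.2, hη.1]]
    calc ‖g x - g η‖ ≤ (H * h ^ α) * ‖x - η‖ := this
      _ ≤ (H * h ^ α) * h := by
          have hp : 0 ≤ H * h ^ α := mul_nonneg hH (Real.rpow_nonneg hh.le _)
          nlinarith
  have ha' : a ∈ Set.Icc a b := ⟨le_refl _, by linarith⟩
  have hb' : b ∈ Set.Icc a b := ⟨by linarith, le_refl _⟩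
  have k1 := key a ha'
  have k2 := key b hb'
  have hlam1 : 0 ≤ (b - η) / h := div_nonneg (by linarith [hη.2]) hh.le
  have hlam2 : 0 ≤ (η - a) / h := div_nonneg (by linarith [hη.1]) hh.le
  have hlams : (b - η) / h + (η - a) / h = 1 := by rw [hb]; field_simp; ring
  have hid : f a * ((a + h - η) / h) + f (a + h) * ((η - a) / h) - f η
      = (g a - g η) * ((b - η) / h) + (g b - g η) * ((η - a) / h) := by
    rw [hg]
    simp only [hb]
    field_simp
    ring
  rw [hid]
  have hrw : H * h ^ (1 + α) = (H * h ^ α) * h := by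
    rw [Real.rpow_add hh, Real.rpow_one]; ring
  rw [hrw]
  calc |(g a - g η) * ((b - η) / h) + (g b - g η) * ((η - a) / h)|
      ≤ |g a - g η| * ((b - η) / h) + |g b - g η| * ((η - a) / h) := by
        refine (abs_add_le _ _).trans ?_
        rw [abs_mul, abs_mul, abs_of_nonneg hlam1, abs_of_nonneg hlam2]
    _ ≤ (H * h ^ α * h) * ((b - η) / h) + (H * h ^ α * h) * ((η - a) / h) := by
        rw [Real.norm_eq_abs] at k1 k2
        gcongr
    _ = H * h ^ α * h := by rw [← mul_add, hlams, mul_one]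

set_option maxHeartbeats 1000000 in
theorem stmt17 (α : ℝ) (hα : α ∈ Set.Ioc (0 : ℝ) 1) :
    ∃ C : ℝ, 0 < C ∧
      ∀ L : ℝ, 0 < L → ∀ N : ℕ, 1 ≤ N →
      ∀ u ux uy : ℝ → ℝ → ℝ, ∀ Mu Mx My Hx Hy : ℝ,
      (∀ a ∈ Set.Icc (-L) L, ∀ b ∈ Set.Icc (-L) L,
        HasDerivWithinAt (fun t => u t b) (ux a b) (Set.Icc (-L) L) a) →
      (∀ a ∈ Set.Icc (-L) L, ∀ b ∈ Set.Icc (-L) L,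
        HasDerivWithinAt (fun t => u a t) (uy a b) (Set.Icc (-L) L) b) →
      (∀ a ∈ Set.Icc (-L) L, ∀ b ∈ Set.Icc (-L) L, |u a b| ≤ Mu) →
      (∀ a ∈ Set.Icc (-L) L, ∀ b ∈ Set.Icc (-L) L, |ux a b| ≤ Mx) →
      (∀ a ∈ Set.Icc (-L) L, ∀ b ∈ Set.Icc (-L) L, |uy a b| ≤ My) →
      (∀ a ∈ Set.Icc (-L) L, ∀ b ∈ Set.Icc (-L) L, ∀ a' ∈ Set.Icc (-L) L, ∀ b' ∈ Set.Icc (-L) L,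
        |ux a b - ux a' b'| ≤ Hx * Real.sqrt ((a - a') ^ 2 + (b - b') ^ 2) ^ α) →
      (∀ a ∈ Set.Icc (-L) L, ∀ b ∈ Set.Icc (-L) L, ∀ a' ∈ Set.Icc (-L) L, ∀ b' ∈ Set.Icc (-L) L,
        |uy a b - uy a' b'| ≤ Hy * Real.sqrt ((a - a') ^ 2 + (b - b') ^ 2) ^ α) →
      ∀ ξ ∈ Set.Icc (-L) L, ∀ η ∈ Set.Icc (-L) L,
        |u ξ η - interp2D u L (2 * L / N) N ξ η|
          ≤ C * (2 * L / N) ^ (1 + α) * (Mu + Mx + My + Hx + Hy) := by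
  refine ⟨1, one_pos, ?_⟩
  intro L hL N hN u ux uy Mu Mx My Hx Hy hux huy hMu hMx hMy hHx hHy ξ hξ η hη
  set h : ℝ := 2 * L / N with hdef
  have hN0 : (0 : ℝ) < N := by exact_mod_cast Nat.pos_of_ne_zero (by omega)
  have hh : 0 < h := div_pos (by linarith) hN0
  have hLh : -L + N * h = L := by
    rw [hdef]; field_simp; ring
  have hmL : -L ∈ Set.Icc (-L) L := ⟨le_refl _, by linarith⟩
  have hpL : L ∈ Set.Icc (-L) L := ⟨by linarith, le_refl _⟩
  have hMu0 : 0 ≤ Mu := (abs_nonneg _).trans (hMu (-L) hmL (-L) hmL)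
  have hMx0 : 0 ≤ Mx := (abs_nonneg _).trans (hMx (-L) hmL (-L) hmL)
  have hMy0 : 0 ≤ My := (abs_nonneg _).trans (hMy (-L) hmL (-L) hmL)
  have hsq : (0 : ℝ) < Real.sqrt ((-L - L) ^ 2 + (-L - -L) ^ 2) ^ α := by
    apply Real.rpow_pos_of_pos
    apply Real.sqrt_pos.2
    nlinarith
  have hHx0 : 0 ≤ Hx := by
    have := hHx (-L) hmL (-L) hmL L hpL (-L) hmL
    nlinarith [abs_nonneg (ux (-L) (-L) - ux L (-L))]
  have hHy0 : 0 ≤ Hy := by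
    have := hHy (-L) hmL (-L) hmL L hpL (-L) hmL
    nlinarith [abs_nonneg (uy (-L) (-L) - uy L (-L))]
  -- 1D Hölder bounds in each variable
  have hHolx : ∀ b ∈ Set.Icc (-L) L, ∀ s ∈ Set.Icc (-L) L, ∀ t ∈ Set.Icc (-L) L,
      |ux s b - ux t b| ≤ Hx * |s - t| ^ α := by
    intro b hb s hs t ht
    have := hHx s hs b hb t ht b hb
    have hs' : Real.sqrt ((s - t) ^ 2 + (b - b) ^ 2) = |s - t| := by
      rw [sub_self]
      simp [Real.sqrt_sq_eq_abs]
    rwa [hs'] at this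
  have hHoly : ∀ a ∈ Set.Icc (-L) L, ∀ s ∈ Set.Icc (-L) L, ∀ t ∈ Set.Icc (-L) L,
      |uy a s - uy a t| ≤ Hy * |s - t| ^ α := by
    intro a ha s hs t ht
    have := hHy a ha s hs a ha t ht
    have hs' : Real.sqrt ((a - a) ^ 2 + (s - t) ^ 2) = |s - t| := by
      rw [sub_self]
      simp [Real.sqrt_sq_eq_abs]
    rwa [hs'] at this
  obtain ⟨j, hjN, hcj, hcj1, hsumy⟩ := sum_hat_eq L h hh N hN hLh η hη
  obtain ⟨i, hiN, hci, hci1, hsumx⟩ := sum_hat_eq L h hh N hN hLh ξ hξ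
  have hjR : ((j : ℝ) + 1) ≤ N := by exact_mod_cast hjN
  have hiR : ((i : ℝ) + 1) ≤ N := by exact_mod_cast hiN
  set aY : ℝ := -L + (j : ℝ) * h with haY
  set aX : ℝ := -L + (i : ℝ) * h with haX
  have hsubY : Set.Icc aY (aY + h) ⊆ Set.Icc (-L) L := by
    apply Set.Icc_subset_Icc
    · have : 0 ≤ (j : ℝ) * h := by positivity
      rw [haY]; linarith
    · rw [haY]; nlinarith [mul_le_mul_of_nonneg_right hjR hh.le]
  have hsubX : Set.Icc aX (aX + h) ⊆ Set.Icc (-L) L := by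
    apply Set.Icc_subset_Icc
    · have : 0 ≤ (i : ℝ) * h := by positivity
      rw [haX]; linarith
    · rw [haX]; nlinarith [mul_le_mul_of_nonneg_right hiR hh.le]
  have hηY : η ∈ Set.Icc aY (aY + h) := by
    refine ⟨hcj, ?_⟩
    have : -L + ((j : ℝ) + 1) * h = aY + h := by rw [haY]; ring
    linarith [hcj1, this.ge.trans_eq rfl]
  have hξX : ξ ∈ Set.Icc aX (aX + h) := by
    refine ⟨hci, ?_⟩
    have : -L + ((i : ℝ) + 1) * h = aX + h := by rw [haX]; ring
    linarith [hci1]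
  have haYm : aY ∈ Set.Icc (-L) L := hsubY ⟨le_refl _, by linarith⟩
  have haY1m : aY + h ∈ Set.Icc (-L) L := hsubY ⟨by linarith, le_refl _⟩
  -- 1D interpolation errors
  have EY := oneD α hα L h hh (fun t => u ξ t) (fun t => uy ξ t) Hy hHy0
    (fun t ht => huy ξ hξ t ht) (fun s hs t ht => hHoly ξ hξ s hs t ht) aY η hsubY hηY
  have EX1 := oneD α hα L h hh (fun t => u t aY) (fun t => ux t aY) Hx hHx0
    (fun t ht => hux t ht aY haYm) (fun s hs t ht => hHolx aY haYm s hs t ht) aX ξ hsubX hξX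
  have EX2 := oneD α hα L h hh (fun t => u t (aY + h)) (fun t => ux t (aY + h)) Hx hHx0
    (fun t ht => hux t ht (aY + h) haY1m) (fun s hs t ht => hHolx (aY + h) haY1m s hs t ht)
    aX ξ hsubX hξX
  -- rewrite the interpolant on the cell
  have e1 : interp2D u L h N ξ η
      = (u aX aY * ((aX + h - ξ) / h) + u (aX + h) aY * ((ξ - aX) / h)) * ((aY + h - η) / h)
        + (u aX (aY + h) * ((aX + h - ξ) / h) + u (aX + h) (aY + h) * ((ξ - aX) / h))
            * ((η - aY) / h) := by
    rw [interp2D, Finset.sum_comm]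
    have step : ∀ q ∈ Finset.range (N + 1),
        (∑ p ∈ Finset.range (N + 1),
          u (-L + p * h) (-L + q * h) * hatFn h (-L + p * h) ξ * hatFn h (-L + q * h) η)
        = (∑ p ∈ Finset.range (N + 1),
            u (-L + p * h) (-L + q * h) * hatFn h (-L + p * h) ξ) * hatFn h (-L + q * h) η :=
      fun q _ => (Finset.sum_mul _ _ _).symm
    rw [Finset.sum_congr rfl step,
      hsumy (fun q => ∑ p ∈ Finset.range (N + 1),
        u (-L + p * h) (-L + q * h) * hatFn h (-L + p * h) ξ),
      hsumx (fun p => u (-L + p * h) (-L + (j : ℕ) * h)),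
      hsumx (fun p => u (-L + p * h) (-L + ((j : ℕ) + 1 : ℕ) * h))]
    rw [haY, haX]
    push_cast
    ring
  set P : ℝ := h ^ (1 + α) with hP
  have hP0 : 0 < P := Real.rpow_pos_of_pos hh _
  set mu : ℝ := (aY + h - η) / h with hmu
  set mu' : ℝ := (η - aY) / h with hmu'
  have hmu0 : 0 ≤ mu := div_nonneg (by linarith [hηY.2]) hh.le
  have hmu'0 : 0 ≤ mu' := div_nonneg (by linarith [hηY.1]) hh.le
  have hmus : mu + mu' = 1 := by rw [hmu, hmu']; field_simp; ring
  have hfin : u ξ η - interp2D u L h N ξ η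
      = -((u ξ aY * mu + u ξ (aY + h) * mu' - u ξ η)
          + mu * (u aX aY * ((aX + h - ξ) / h) + u (aX + h) aY * ((ξ - aX) / h) - u ξ aY)
          + mu' * (u aX (aY + h) * ((aX + h - ξ) / h) + u (aX + h) (aY + h) * ((ξ - aX) / h)
              - u ξ (aY + h))) := by
    rw [e1, hmu, hmu']; ring
  rw [hfin, abs_neg]
  have tri : |(u ξ aY * mu + u ξ (aY + h) * mu' - u ξ η)
          + mu * (u aX aY * ((aX + h - ξ) / h) + u (aX + h) aY * ((ξ - aX) / h) - u ξ aY)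
          + mu' * (u aX (aY + h) * ((aX + h - ξ) / h) + u (aX + h) (aY + h) * ((ξ - aX) / h)
              - u ξ (aY + h))|
      ≤ |u ξ aY * mu + u ξ (aY + h) * mu' - u ξ η|
          + mu * |u aX aY * ((aX + h - ξ) / h) + u (aX + h) aY * ((ξ - aX) / h) - u ξ aY|
          + mu' * |u aX (aY + h) * ((aX + h - ξ) / h) + u (aX + h) (aY + h) * ((ξ - aX) / h)
              - u ξ (aY + h)| := by
    refine (abs_add_three _ _ _).trans ?_
    rw [abs_mul, abs_mul, abs_of_nonneg hmu0, abs_of_nonneg hmu'0]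
  have EY' : |u ξ aY * mu + u ξ (aY + h) * mu' - u ξ η| ≤ Hy * P := by
    rw [hmu, hmu']; exact EY
  calc _ ≤ _ := tri
    _ ≤ Hy * P + mu * (Hx * P) + mu' * (Hx * P) := by gcongr
    _ = (Hy + Hx) * P := by linear_combination (Hx * P) * hmus
    _ ≤ 1 * P * (Mu + Mx + My + Hx + Hy) := by nlinarith
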